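/- For every θ > 0 and every δ with δ > 1/(1+θ), setting γ = ((1+θ)·δ − 1)/(δ·θ) one has γ > 0 and p(θ, γ, δ) = θ/(1+θ) = p(θ, 1, 1). In particular, for any such δ ≠ 1 the two distinct parameter pairs (γ, δ) ≠ (1, 1) induce the same conditional probability, so the parametrization of the three-flow binary model is not injective. -/

import Mathlib

/-- Conditional probability of the three-flow binary regression-by-composition model:
a Bernoulli(1/2) reference acted on by an odds-scaling flow `θ`, a risk-ratio flow `γ`,
and a survival-ratio flow `δ`. -/
noncomputable def condProb (θ γ δ : ℝ) : ℝ := 1 - (1 - γ * θ / (1 + θ)) * δ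

/-- For every `θ > 0` and every `δ > 1/(1+θ)`, setting `γ = ((1+θ)·δ − 1)/(δ·θ)` one has
`γ > 0` and `p(θ,γ,δ) = θ/(1+θ) = p(θ,1,1)`; moreover for `δ ≠ 1` the pair `(γ,δ)`
differs from `(1,1)`, so the parametrization is not injective. -/
theorem three_flow_non_identifiable (θ : ℝ) (hθ : 0 < θ) (δ : ℝ)
    (hδ : 1 / (1 + θ) < δ) :
    0 < ((1 + θ) * δ - 1) / (δ * θ) ∧
    condProb θ (((1 + θ) * δ - 1) / (δ * θ)) δ = θ / (1 + θ) ∧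
    condProb θ 1 1 = θ / (1 + θ) ∧
    (δ ≠ 1 → ((((1 + θ) * δ - 1) / (δ * θ)), δ) ≠ ((1 : ℝ), (1 : ℝ))) := by
  have h1θ : 0 < 1 + θ := by linarith
  have hδ0 : 0 < δ := lt_trans (by positivity) hδ
  have hnum : 0 < (1 + θ) * δ - 1 := by
    have := (div_lt_iff₀ h1θ).mp hδ
    nlinarith
  refine ⟨by positivity, ?_, ?_, ?_⟩
  · unfold condProb
    field_simp
    ring
  · unfold condProb
    field_simp
    ring
  · intro hδ1 h
    exact hδ1 (congrArg Prod.snd h)
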